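/- Let g be a finite-dimensional Lie algebra over an algebraically closed field with an inner CPA-structure x·y = [φ(x),y] (φ a Lie algebra endomorphism), and let g = ⊕_α g_α be the generalized eigenspace decomposition of φ. Then n := g₀ (the generalized eigenspace for eigenvalue 0) and h := ⊕_{α≠0} g_α are ideals of g with g = n ⊕ h. -/

import Mathlib

open Module.End

private lemma cpa_key {F : Type*} [Field F] {L : Type*} [LieRing L] [LieAlgebra F L]
    (φ : L →ₗ⁅F⁆ L) (hcomm : ∀ x y : L, ⁅φ x, y⁆ = ⁅φ y, x⁆)
    (β : F) (x y : L) (hy : y ∈ maxGenEigenspace (φ : L →ₗ[F] L) β) :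
    ⁅x, y⁆ ∈ maxGenEigenspace (φ : L →ₗ[F] L) (-(β * β)) := by
  set f : Module.End F L := (φ : L →ₗ[F] L) with hf
  have h2 : ∀ a b : L, f ⁅a, b⁆ = -⁅a, f (f b)⁆ := by
    intro a b
    calc f ⁅a, b⁆ = ⁅φ a, φ b⁆ := φ.map_lie a b
      _ = ⁅φ (φ b), a⁆ := hcomm a (φ b)
      _ = -⁅a, f (f b)⁆ := by rw [← lie_skew]; rfl
  rw [mem_maxGenEigenspace] at hy ⊢
  obtain ⟨k, hk⟩ := hy
  refine ⟨k, ?_⟩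
  set s : Module.End F L := β • 1 with hs
  have hcom : f * s = s * f := by
    ext v; simp [hs, Module.End.mul_apply]
  set Q : Module.End F L := (β * β) • (1 : Module.End F L) - f * f with hQdef
  have main : ∀ (n : ℕ) (z : L), ((f + (β * β) • 1) ^ n) ⁅x, z⁆ = ⁅x, (Q ^ n) z⁆ := by
    intro n
    induction n with
    | zero => intro z; simp
    | succ n ih =>
      intro z
      rw [pow_succ', pow_succ']
      rw [Module.End.mul_apply, Module.End.mul_apply, ih]
      rw [LinearMap.add_apply, h2, hQdef]
      rw [LinearMap.sub_apply, lie_sub]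
      simp only [mul_smul, Module.End.mul_apply, LinearMap.smul_apply, Module.End.one_apply, lie_smul, smul_sub]
      rw [← lie_skew]
      abel
  have hrw : f - (-(β * β)) • (1 : Module.End F L) = f + (β * β) • 1 := by
    rw [neg_smul, sub_neg_eq_add]
  rw [hrw, main k y]
  have hfac : Q = (s + f) * (s - f) := by
    rw [hQdef, hs, mul_sub, add_mul, add_mul, ← hcom]
    have : (β • (1:Module.End F L)) * (β • 1) = (β * β) • 1 := by
      ext v; simp [Module.End.mul_apply, mul_smul, mul_comm]
    rw [this]; abel
  have hcomm2 : Commute (s + f) (s - f) := by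
    have h1 : Commute s f := hcom.symm
    exact ((Commute.refl s).sub_right h1).add_left (h1.symm.sub_right (Commute.refl f))
  have hzero : (Q ^ k) y = 0 := by
    rw [hfac, hcomm2.mul_pow, Module.End.mul_apply]
    have : s - f = -(f - s) := by abel
    rw [this, neg_pow]
    have hk' : ((f - s) ^ k) y = 0 := hk
    simp [Module.End.mul_apply, hk']
  rw [hzero, lie_zero]

theorem cpa_eigenspace_ideal_decomposition
    (F : Type*) [Field F] [IsAlgClosed F] (L : Type*) [LieRing L] [LieAlgebra F L]
    [FiniteDimensional F L]
    (φ : L →ₗ⁅F⁆ L)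
    (hcomm : ∀ x y : L, ⁅φ x, y⁆ = ⁅φ y, x⁆)
    (hpost : ∀ x y z : L, ⁅φ ⁅x, y⁆, z⁆ = ⁅φ x, ⁅φ y, z⁆⁆ - ⁅φ y, ⁅φ x, z⁆⁆)
    (hder : ∀ x y z : L, ⁅φ x, ⁅y, z⁆⁆ = ⁅⁅φ x, y⁆, z⁆ + ⁅y, ⁅φ x, z⁆⁆) :
    ∃ N H : LieIdeal F L,
      N.toSubmodule = Module.End.maxGenEigenspace (φ : L →ₗ[F] L) 0 ∧
      H.toSubmodule = (⨆ α ∈ {a : F | a ≠ 0},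
        Module.End.maxGenEigenspace (φ : L →ₗ[F] L) α) ∧
      N ⊓ H = ⊥ ∧ N ⊔ H = ⊤ := by
  set f : Module.End F L := (φ : L →ₗ[F] L) with hf
  set S : Submodule F L := ⨆ α ∈ {a : F | a ≠ 0}, maxGenEigenspace f α with hS
  refine ⟨{ maxGenEigenspace f 0 with
      lie_mem := fun {x m} hm => by
        have h := cpa_key φ hcomm 0 x m hm
        simpa using h },
    { S with
      lie_mem := fun {x m} hm => ?_ }, rfl, rfl, ?_, ?_⟩
  · -- H is an ideal
    have hle : S ≤ Submodule.comap (LieAlgebra.ad F L x) S := by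
      refine iSup₂_le fun α hα => ?_
      intro y hy
      have h := cpa_key φ hcomm α x y hy
      have hα' : (-(α * α)) ∈ {a : F | a ≠ 0} := by
        simpa using mul_ne_zero hα hα
      have : maxGenEigenspace f (-(α * α)) ≤ S :=
        le_iSup₂ (f := fun α (_ : α ∈ {a : F | a ≠ 0}) => maxGenEigenspace f α) _ hα'
      exact Submodule.mem_comap.mpr (this h)
    exact hle hm
  · -- N ⊓ H = ⊥
    rw [← LieSubmodule.toSubmodule_inj, LieSubmodule.inf_toSubmodule,
      LieSubmodule.bot_toSubmodule]
    have hind := (independent_maxGenEigenspace f) 0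
    have := hind.eq_bot
    convert this using 2 <;> rfl
  · -- N ⊔ H = ⊤
    rw [← LieSubmodule.toSubmodule_inj, LieSubmodule.sup_toSubmodule,
      LieSubmodule.top_toSubmodule]
    rw [eq_top_iff, ← iSup_maxGenEigenspace_eq_top f]
    refine iSup_le fun α => ?_
    by_cases hα : α = 0
    · subst hα; exact le_sup_left
    · exact le_trans (le_iSup₂ (f := fun α (_ : α ∈ {a : F | a ≠ 0}) => maxGenEigenspace f α) α hα) le_sup_right
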